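/- Let τ_{i,0}, τ_{i,1} satisfy 1 ≥ τ_{i,0} ≥ τ_{i,1} ≥ 0 for i = 1..n with n ≥ 2. If τ_{i,0} = τ_{i,1} for all i ∈ {2,...,n−1} and ((τ_{1,0}² + τ_{1,1}²)(τ_{n,0}² + τ_{n,1}²))^{1/4} = (τ_{1,0}τ_{n,0} + τ_{1,1}τ_{n,1})^{1/2}, then S*_{n-Chain} = Ŝ*_{n-Chain}, i.e., ((τ_{1,0}² + τ_{1,1}²)(τ_{n,0}² + τ_{n,1}²))^{1/4} ∏_{i=2}^{n−1} √(τ_{i,0}) = sqrt(∏_{i=1}^n τ_{i,0} + ∏_{i=1}^n τ_{i,1}). -/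
import Mathlib


open Finset

lemma prod_sqrt_aux {ι : Type*} (s : Finset ι) (f : ι → ℝ)
    (hf : ∀ i ∈ s, 0 ≤ f i) :
    ∏ i ∈ s, Real.sqrt (f i) = Real.sqrt (∏ i ∈ s, f i) := by
  induction s using Finset.cons_induction with
  | empty => simp
  | cons a s ha ih =>
    rw [Finset.prod_cons, Finset.prod_cons, ih (fun i hi => hf i (Finset.mem_cons_of_mem hi)),
      Real.sqrt_mul (hf a (Finset.mem_cons_self a s))]

theorem chain_scores_equality_condition (n : ℕ) (hn : 2 ≤ n)
    (τ : Fin n → Fin 2 → ℝ)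
    (h1 : ∀ i, τ i 0 ≤ 1) (h2 : ∀ i, τ i 1 ≤ τ i 0) (h3 : ∀ i, 0 ≤ τ i 1)
    (hmid : ∀ i : Fin n, 1 ≤ (i : ℕ) → (i : ℕ) < n - 1 → τ i 0 = τ i 1)
    (hends : (((τ ⟨0, by omega⟩ 0) ^ 2 + (τ ⟨0, by omega⟩ 1) ^ 2) *
          ((τ ⟨n - 1, by omega⟩ 0) ^ 2 + (τ ⟨n - 1, by omega⟩ 1) ^ 2)) ^ ((1 : ℝ) / 4) =
        (τ ⟨0, by omega⟩ 0 * τ ⟨n - 1, by omega⟩ 0 +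
          τ ⟨0, by omega⟩ 1 * τ ⟨n - 1, by omega⟩ 1) ^ ((1 : ℝ) / 2)) :
    (((τ ⟨0, by omega⟩ 0) ^ 2 + (τ ⟨0, by omega⟩ 1) ^ 2) *
          ((τ ⟨n - 1, by omega⟩ 0) ^ 2 + (τ ⟨n - 1, by omega⟩ 1) ^ 2)) ^ ((1 : ℝ) / 4) *
        (∏ i ∈ Finset.univ.filter (fun i : Fin n => 1 ≤ (i : ℕ) ∧ (i : ℕ) < n - 1),
          Real.sqrt (τ i 0)) =
      Real.sqrt (∏ i, τ i 0 + ∏ i, τ i 1) := by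
  have h0 : ∀ i, (0:ℝ) ≤ τ i 0 := fun i => (h3 i).trans (h2 i)
  set i0 : Fin n := ⟨0, by omega⟩ with hi0
  set i1 : Fin n := ⟨n - 1, by omega⟩ with hi1
  have hne : i0 ≠ i1 := by simp [hi0, hi1, Fin.ext_iff]; omega
  set s : Finset (Fin n) :=
    Finset.univ.filter (fun i : Fin n => 1 ≤ (i : ℕ) ∧ (i : ℕ) < n - 1) with hs
  have hset : Finset.univ.filter (fun i : Fin n => ¬ (1 ≤ (i : ℕ) ∧ (i : ℕ) < n - 1))
      = {i0, i1} := by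
    ext i
    simp [hi0, hi1, Fin.ext_iff]
    omega
  have hsplit : ∀ j : Fin 2, ∏ i, τ i j = τ i0 j * τ i1 j * ∏ i ∈ s, τ i j := by
    intro j
    rw [← Finset.prod_filter_mul_prod_filter_not Finset.univ
      (fun i : Fin n => 1 ≤ (i : ℕ) ∧ (i : ℕ) < n - 1) (fun i => τ i j), hset,
      Finset.prod_insert (by simp [hne]), Finset.prod_singleton, ← hs]
    ring
  have hmid' : ∏ i ∈ s, τ i 1 = ∏ i ∈ s, τ i 0 := by
    apply Finset.prod_congr rfl
    intro i hi
    rw [hs, Finset.mem_filter] at hi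
    exact (hmid i hi.2.1 hi.2.2).symm
  have hPnn : 0 ≤ ∏ i ∈ s, τ i 0 := Finset.prod_nonneg fun i _ => h0 i
  have hcnn : 0 ≤ τ i0 0 * τ i1 0 + τ i0 1 * τ i1 1 := by
    have := mul_nonneg (h0 i0) (h0 i1)
    have := mul_nonneg (h3 i0) (h3 i1)
    linarith
  rw [hends, ← Real.sqrt_eq_rpow, prod_sqrt_aux s _ (fun i _ => h0 i),
    ← Real.sqrt_mul hcnn, hsplit 0, hsplit 1, hmid']
  ring_nf
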